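/- Let A be a unital Banach algebra over ℝ and let a ∈ A with ‖a‖ < 2π. Then both series η(a) = Σ_{k=0}^∞ (1/(k+1)!) a^k and ζ(a) = Σ_{k=0}^∞ (B_k / k!) a^k converge absolutely in A, and they are mutually inverse: η(a) * ζ(a) = 1 and ζ(a) * η(a) = 1. In particular η(a) is a unit of A. -/

import Mathlib

open scoped BigOperators
open Real Finset

/-- key scalar identity in ℚ -/
lemma key_q (n : ℕ) :
    (∑ ij ∈ Finset.HasAntidiagonal.antidiagonal n,
      (1 / ((Nat.factorial (ij.1 + 1) : ℚ))) * ((bernoulli ij.2) / (Nat.factorial ij.2 : ℚ)))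
      = if n = 0 then 1 else 0 := by
  rw [Finset.Nat.sum_antidiagonal_eq_sum_range_succ_mk]
  rw [← Finset.sum_range_reflect]
  have h1 : ∀ j ∈ Finset.range (n + 1),
      (1 / ((Nat.factorial (n + 1 - 1 - j + 1) : ℚ))) *
        (bernoulli (n - (n + 1 - 1 - j)) / (Nat.factorial (n - (n + 1 - 1 - j)) : ℚ))
      = (1 / (Nat.factorial (n+1) : ℚ)) * (((n+1).choose j : ℚ) * bernoulli j) := by
    intro j hj
    rw [Finset.mem_range] at hj
    have hjn : j ≤ n := Nat.lt_succ_iff.mp hj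
    have e1 : n + 1 - 1 - j = n - j := by omega
    have e2 : n - (n - j) = j := by omega
    rw [e1, e2]
    have hfac : ((n+1).choose j : ℚ) * (Nat.factorial j) * (Nat.factorial (n + 1 - j))
        = (Nat.factorial (n+1) : ℚ) := by
      rw_mod_cast [Nat.choose_mul_factorial_mul_factorial (by omega : j ≤ n + 1)]
    have e3 : n - j + 1 = n + 1 - j := by omega
    have h0 : (Nat.factorial (n - j + 1) : ℚ) ≠ 0 := by positivity
    have h0' : (Nat.factorial j : ℚ) ≠ 0 := by positivity
    have h0'' : (Nat.factorial (n+1) : ℚ) ≠ 0 := by positivity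
    rw [e3] at h0 ⊢
    field_simp
    rw [← hfac]; ring
  rw [Finset.sum_congr rfl h1, ← Finset.mul_sum, sum_bernoulli]
  rcases n with _ | n
  · norm_num
  · norm_num

lemma key_r (n : ℕ) :
    (∑ ij ∈ Finset.HasAntidiagonal.antidiagonal n,
      (1 / ((Nat.factorial (ij.1 + 1) : ℝ))) * (((bernoulli ij.2 : ℚ) : ℝ) / (Nat.factorial ij.2 : ℝ)))
      = if n = 0 then 1 else 0 := by
  have := congrArg (fun q : ℚ => (q : ℝ)) (key_q n)
  push_cast at this
  rw [this]
  split <;> norm_num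

lemma bernoulli_div_factorial_bound (k : ℕ) :
    |((bernoulli k : ℚ) : ℝ)| / (Nat.factorial k : ℝ) ≤ (π^2/3) / (2*π)^k := by
  have hpi3 : (3:ℝ) ≤ π := by linarith [Real.pi_gt_three]
  have hpi0 : (0:ℝ) < π := by linarith
  match k with
  | 0 => simp; nlinarith
  | 1 =>
      norm_num [bernoulli_one]
      rw [div_le_div_iff₀ (by norm_num) (by positivity)]
      nlinarith
  | (k+2) =>
    rcases Nat.even_or_odd (k+2) with he | ho
    · obtain ⟨m, hm⟩ := he
      have hm1 : m ≠ 0 := by omega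
      have hk2 : k + 2 = 2 * m := by omega
      rw [hk2]
      have hV := hasSum_zeta_nat hm1
      set B : ℝ := ((bernoulli (2*m) : ℚ) : ℝ) with hB
      set F : ℝ := ((2*m).factorial : ℝ) with hF
      set V : ℝ := (-1:ℝ)^(m+1) * 2^(2*m-1) * π^(2*m) * B / F with hVdef
      have hF0 : 0 < F := by rw [hF]; exact_mod_cast Nat.factorial_pos _
      have hV0 : 0 ≤ V := hasSum_le (fun n => by positivity) hasSum_zero hV
      have hVle : V ≤ π^2/6 := by
        refine hasSum_le (fun n => ?_) hV hasSum_zeta_two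
        rcases Nat.eq_zero_or_pos n with rfl | hn
        · simp [zero_pow (by omega : 2*m ≠ 0)]
        · have h1 : (1:ℝ) ≤ (n:ℝ) := by exact_mod_cast hn
          have : (n:ℝ)^2 ≤ (n:ℝ)^(2*m) := pow_le_pow_right₀ h1 (by omega)
          exact one_div_le_one_div_of_le (by positivity) this
      have hP0 : (0:ℝ) < (2*π)^(2*m) := by positivity
      have h2 : (2:ℝ)^(2*m-1) = 2^(2*m)/2 := by
        rw [eq_div_iff (by norm_num : (2:ℝ) ≠ 0), ← pow_succ]
        congr 1; omega
      have hVeq : V = (-1:ℝ)^(m+1) * B * (2*π)^(2*m) / (2*F) := by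
        rw [hVdef, h2, mul_pow]; ring
      have hsB : (-1:ℝ)^(m+1) * B = 2*V*F/(2*π)^(2*m) := by
        field_simp at hVeq ⊢
        linarith [hVeq]
      have habs : |B| = (-1:ℝ)^(m+1) * B := by
        have h1 : |(-1:ℝ)^(m+1) * B| = |B| := by
          rw [abs_mul, abs_pow, abs_neg, abs_one, one_pow, one_mul]
        have h2' : 0 ≤ (-1:ℝ)^(m+1) * B := by
          rw [hsB]; positivity
        rw [← h1, abs_of_nonneg h2']
      rw [habs, hsB]
      rw [div_le_div_iff₀ (by positivity) hP0]
      have : 2*V*F/(2*π)^(2*m) * (2*π)^(2*m) = 2*V*F := by field_simp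
      rw [this]
      nlinarith [hVle, hF0, hP0]
    · have : bernoulli (k+2) = 0 := by
        rw [bernoulli_eq_bernoulli'_of_ne_one (by omega)]
        exact bernoulli'_eq_zero_of_odd ho (by omega)
      rw [this]
      simp
      positivity

theorem eta_zeta_mutually_inverse {A : Type*} [NormedRing A] [NormedAlgebra ℝ A]
    [CompleteSpace A] (a : A) (ha : ‖a‖ < 2 * Real.pi) :
    (Summable fun k : ℕ => ‖(1 / (Nat.factorial (k + 1) : ℝ)) • a ^ k‖) ∧
    (Summable fun k : ℕ => ‖(((bernoulli k : ℚ) : ℝ) / (Nat.factorial k : ℝ)) • a ^ k‖) ∧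
    (∑' k : ℕ, (1 / (Nat.factorial (k + 1) : ℝ)) • a ^ k) *
        (∑' k : ℕ, (((bernoulli k : ℚ) : ℝ) / (Nat.factorial k : ℝ)) • a ^ k) = 1 ∧
    (∑' k : ℕ, (((bernoulli k : ℚ) : ℝ) / (Nat.factorial k : ℝ)) • a ^ k) *
        (∑' k : ℕ, (1 / (Nat.factorial (k + 1) : ℝ)) • a ^ k) = 1 ∧
    IsUnit (∑' k : ℕ, (1 / (Nat.factorial (k + 1) : ℝ)) • a ^ k) := by
  have hpi0 : (0:ℝ) < π := Real.pi_pos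
  set c : ℕ → ℝ := fun k => 1 / (Nat.factorial (k + 1) : ℝ) with hc
  set d : ℕ → ℝ := fun k => ((bernoulli k : ℚ) : ℝ) / (Nat.factorial k : ℝ) with hd
  set M : ℝ := max ‖(1 : A)‖ 1 with hMdef
  have hM1 : (1:ℝ) ≤ M := le_max_right _ _
  have hM : ∀ k : ℕ, ‖a ^ k‖ ≤ M * ‖a‖ ^ k := by
    intro k
    match k with
    | 0 => simp only [pow_zero, mul_one]; exact le_max_left _ _
    | (k+1) =>
        calc ‖a ^ (k+1)‖ ≤ ‖a‖ ^ (k+1) := norm_pow_le' a k.succ_pos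
        _ ≤ M * ‖a‖ ^ (k+1) := le_mul_of_one_le_left (by positivity) hM1
  -- summability of η
  have h1 : Summable fun k : ℕ => ‖c k • a ^ k‖ := by
    refine Summable.of_nonneg_of_le (fun k => norm_nonneg _) (fun k => ?_)
      ((Real.summable_pow_div_factorial ‖a‖).mul_left M)
    rw [norm_smul]
    calc ‖c k‖ * ‖a ^ k‖ ≤ ‖c k‖ * (M * ‖a‖ ^ k) := by
          exact mul_le_mul_of_nonneg_left (hM k) (norm_nonneg _)
      _ ≤ (1 / (Nat.factorial k : ℝ)) * (M * ‖a‖ ^ k) := by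
          apply mul_le_mul_of_nonneg_right _ (by positivity)
          rw [hc, Real.norm_eq_abs, abs_of_nonneg (by positivity)]
          apply div_le_div_of_nonneg_left one_pos.le (by positivity)
          exact_mod_cast Nat.factorial_le (Nat.le_succ k)
      _ = M * (‖a‖ ^ k / (Nat.factorial k : ℝ)) := by ring
  -- summability of ζ
  have hr0 : (0:ℝ) ≤ ‖a‖ / (2*π) := by positivity
  have hr1 : ‖a‖ / (2*π) < 1 := (div_lt_one (by positivity)).mpr ha
  have h2 : Summable fun k : ℕ => ‖d k • a ^ k‖ := by
    refine Summable.of_nonneg_of_le (fun k => norm_nonneg _) (fun k => ?_)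
      (((summable_geometric_of_lt_one hr0 hr1).mul_left (M * (π^2/3))))
    rw [norm_smul]
    calc ‖d k‖ * ‖a ^ k‖ ≤ ‖d k‖ * (M * ‖a‖ ^ k) :=
          mul_le_mul_of_nonneg_left (hM k) (norm_nonneg _)
      _ ≤ ((π^2/3) / (2*π)^k) * (M * ‖a‖ ^ k) := by
          apply mul_le_mul_of_nonneg_right _ (by positivity)
          rw [hd, Real.norm_eq_abs, abs_div, abs_of_nonneg (by positivity : (0:ℝ) ≤ (Nat.factorial k : ℝ))]
          exact bernoulli_div_factorial_bound k
      _ = M * (π^2/3) * (‖a‖ / (2*π))^k := by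
          rw [div_pow]; field_simp
  have hstep : ∀ n : ℕ, ∀ ij ∈ Finset.HasAntidiagonal.antidiagonal n,
      (c ij.1 • a ^ ij.1) * (d ij.2 • a ^ ij.2) = (c ij.1 * d ij.2) • a ^ n := by
    intro n ij hij
    rw [Finset.HasAntidiagonal.mem_antidiagonal] at hij
    rw [smul_mul_smul_comm, ← pow_add, hij]
  have hkey : ∀ n : ℕ, ∑ ij ∈ Finset.HasAntidiagonal.antidiagonal n, c ij.1 * d ij.2
      = if n = 0 then (1:ℝ) else 0 := fun n => key_r n
  have hone : (∑' n : ℕ, (if n = 0 then (1:ℝ) else 0) • a ^ n) = 1 := by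
    rw [tsum_eq_single 0 (fun n hn => by simp [hn])]
    simp
  have h3 : (∑' k : ℕ, c k • a ^ k) * (∑' k : ℕ, d k • a ^ k) = 1 := by
    rw [tsum_mul_tsum_eq_tsum_sum_antidiagonal_of_summable_norm h1 h2, ← hone]
    refine tsum_congr fun n => ?_
    rw [Finset.sum_congr rfl (hstep n), ← Finset.sum_smul, hkey n]
  have h4 : (∑' k : ℕ, d k • a ^ k) * (∑' k : ℕ, c k • a ^ k) = 1 := by
    rw [tsum_mul_tsum_eq_tsum_sum_antidiagonal_of_summable_norm h2 h1, ← hone]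
    refine tsum_congr fun n => ?_
    have hstep' : ∀ ij ∈ Finset.HasAntidiagonal.antidiagonal n,
        (d ij.1 • a ^ ij.1) * (c ij.2 • a ^ ij.2) = (c ij.2 * d ij.1) • a ^ n := by
      intro ij hij
      rw [Finset.HasAntidiagonal.mem_antidiagonal] at hij
      rw [smul_mul_smul_comm, ← pow_add, hij, mul_comm]
    rw [Finset.sum_congr rfl hstep', ← Finset.sum_smul]
    congr 1
    rw [← hkey n, ← Finset.Nat.sum_antidiagonal_swap (f := fun ij => c ij.1 * d ij.2)]
    rfl
  exact ⟨h1, h2, h3, h4, ⟨⟨_, _, h3, h4⟩, rfl⟩⟩
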